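/- Let λ₁ ≥ λ₂ ≥ ⋯ ≥ 0 be a nonincreasing summable sequence with λ₁ > 0, let r ≥ 0 be an integer and a, ε > 0 with a + ε∑_{ℓ>r}λ_ℓ ≤ λ₁. Define the scalar recurrence x_{i} = x_{i−1} − x_{i−1}²/(r·x_{i−1} + ∑_{ℓ>r}λ_ℓ), x₀ = λ₁. If n ≥ r·log(λ₁/a) + 1/ε, then x_n ≤ a + ε·∑_{ℓ>r}λ_ℓ. -/

import Mathlib

set_option maxHeartbeats 1000000 in
/-- Core scalar lemma of the RPCholesky error bound: the recurrence
`x_{i} = x_{i−1} − x_{i−1}²/(r x_{i−1} + η)` with `η = ∑_{ℓ>r} λ_ℓ` and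
`x₀ = λ₁` drops below `a + εη` after `n ≥ r log(λ₁/a) + 1/ε` steps. -/
theorem scalar_recurrence_bound
    (lam : ℕ → ℝ) (hanti : Antitone lam) (hnonneg : ∀ j, 0 ≤ lam j)
    (hsum : Summable lam) (hlam1 : 0 < lam 0)
    (r : ℕ) (a ε : ℝ) (ha : 0 < a) (hε : 0 < ε)
    (hle : a + ε * ∑' ℓ, lam (ℓ + r) ≤ lam 0)
    (x : ℕ → ℝ) (hx0 : x 0 = lam 0)
    (hxrec : ∀ i, x (i + 1) = x i - (x i) ^ 2 / (r * x i + ∑' ℓ, lam (ℓ + r)))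
    (n : ℕ) (hn : (n : ℝ) ≥ r * Real.log (lam 0 / a) + 1 / ε) :
    x n ≤ a + ε * ∑' ℓ, lam (ℓ + r) := by
  set η := ∑' ℓ, lam (ℓ + r) with hηdef
  have hη0 : 0 ≤ η := tsum_nonneg (fun ℓ => hnonneg _)
  set b := a + ε * η with hbdef
  have hb0 : 0 < b := by positivity
  -- if r = 0 then λ₁ ≤ η
  have hr0 : r = 0 → lam 0 ≤ η := by
    intro h
    subst h
    have hs : Summable (fun ℓ => lam (ℓ + 0)) := by simpa using hsum
    have := Summable.le_tsum hs 0 (fun j _ => hnonneg _)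
    simpa [hηdef] using this
  -- key: if 0 < y ≤ λ₁ then y ≤ r*y + η
  have hyD : ∀ y : ℝ, 0 < y → y ≤ lam 0 → y ≤ (r : ℝ) * y + η := by
    intro y hy hyl
    rcases Nat.eq_zero_or_pos r with hr | hr
    · have := hr0 hr
      subst hr
      simp only [Nat.cast_zero, zero_mul, zero_add]
      linarith
    · have h1 : (1 : ℝ) ≤ (r : ℝ) := by exact_mod_cast hr
      nlinarith
  -- one-step: nonnegativity and decrease
  have hstep : ∀ i, 0 ≤ x i → x i ≤ lam 0 → 0 ≤ x (i + 1) ∧ x (i + 1) ≤ x i := by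
    intro i h0 h1
    rw [hxrec i]
    set y := x i with hy
    set D := (r : ℝ) * y + η with hD
    have hDnn : 0 ≤ D := by positivity
    constructor
    · rcases eq_or_lt_of_le h0 with h | h
      · simp [← h]
      · have hyD' : y ≤ D := hyD y h h1
        have hDpos : 0 < D := lt_of_lt_of_le h hyD'
        have : y ^ 2 / D ≤ y := by
          rw [div_le_iff₀ hDpos]
          nlinarith
        linarith
    · have : 0 ≤ y ^ 2 / D := div_nonneg (by positivity) hDnn
      linarith
  have hinv : ∀ i, 0 ≤ x i ∧ x i ≤ lam 0 := by
    intro i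
    induction i with
    | zero => exact ⟨hx0 ▸ hlam1.le, hx0.le⟩
    | succ i ih =>
      obtain ⟨h0, h1⟩ := ih
      obtain ⟨h2, h3⟩ := hstep i h0 h1
      exact ⟨h2, h3.trans h1⟩
  have hmono : Antitone x :=
    antitone_nat_of_succ_le (fun i => (hstep i (hinv i).1 (hinv i).2).2)
  by_cases hc : ∃ i ≤ n, x i ≤ b
  · obtain ⟨i, hin, hib⟩ := hc
    exact (hmono hin).trans hib
  push_neg at hc
  exfalso
  -- potential function
  set G : ℕ → ℝ := fun i => (r : ℝ) * Real.log (x i) - η / x i with hG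
  have hGstep : ∀ i, i + 1 ≤ n → G (i + 1) ≤ G i - 1 := by
    intro i hi
    have hy' : b < x (i + 1) := hc _ hi
    have hy : b < x i := hc _ (Nat.le_of_succ_le hi)
    have hyp : 0 < x i := hb0.trans hy
    have hy'p : 0 < x (i + 1) := hb0.trans hy'
    set y := x i with hyd
    set y' := x (i + 1) with hy'd
    set D := (r : ℝ) * y + η with hD
    have hDy : y ≤ D := hyD y hyp (hinv i).2
    have hDpos : 0 < D := lt_of_lt_of_le hyp hDy
    have hrec : y' = y - y ^ 2 / D := by
      simp only [hy'd, hxrec i, ← hyd, ← hD]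
    have hdiff : (y - y') * D = y ^ 2 := by
      rw [hrec]; field_simp; ring
    have hle' : y' ≤ y := hmono (Nat.le_succ i)
    -- logarithm inequality
    have hlog : 1 - y' / y ≤ Real.log y - Real.log y' := by
      have h1 : Real.log (y' / y) ≤ y' / y - 1 :=
        Real.log_le_sub_one_of_pos (div_pos hy'p hyp)
      rw [Real.log_div hy'p.ne' hyp.ne'] at h1
      linarith
    -- main step inequality
    have hkey : (1 : ℝ) ≤ (r : ℝ) * (1 - y' / y) + (η / y' - η / y) := by
      have e1 : (1 : ℝ) - y' / y = (y - y') / y := by field_simp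
      have e2 : η / y' - η / y = η * (y - y') / (y * y') := by
        field_simp
      rw [e1, e2]
      have e3 : (r : ℝ) * ((y - y') / y) = ((r : ℝ) * (y - y')) / y := by ring
      rw [e3, div_add_div _ _ hyp.ne' (mul_pos hyp hy'p).ne', le_div_iff₀ (by positivity)]
      have hdiff' : (y - y') * ((r : ℝ) * y + η) = y ^ 2 := by rw [← hD]; exact hdiff
      have h4 : (y - y') * ((r : ℝ) * y + η) * y' = y ^ 2 * y' := by rw [hdiff']
      nlinarith [h4, mul_nonneg hη0 (sq_nonneg (y - y'))]
    have : (1 : ℝ) ≤ (r : ℝ) * (Real.log y - Real.log y') + (η / y' - η / y) := by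
      have hr' : (0 : ℝ) ≤ (r : ℝ) := Nat.cast_nonneg r
      have := mul_le_mul_of_nonneg_left hlog hr'
      linarith
    simp only [hG]
    linarith
  -- telescoping
  have htel : ∀ i, i ≤ n → G i ≤ G 0 - i := by
    intro i
    induction i with
    | zero => simp
    | succ i ih =>
      intro hi
      have h1 := hGstep i hi
      have h2 := ih (Nat.le_of_succ_le hi)
      push_cast
      linarith
  have hGn := htel n le_rfl
  -- final contradiction
  have hxn : b < x n := hc n le_rfl
  have hxa : a < x n := by
    have : a ≤ b := by nlinarith
    linarith
  have hxnp : 0 < x n := hb0.trans hxn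
  have hG0 : G 0 - G n = (r : ℝ) * (Real.log (lam 0) - Real.log (x n)) + (η / x n - η / lam 0) := by
    simp only [hG, hx0]; ring
  have hlog2 : Real.log (lam 0) - Real.log (x n) ≤ Real.log (lam 0 / a) := by
    rw [Real.log_div hlam1.ne' ha.ne']
    have : Real.log a ≤ Real.log (x n) := Real.log_le_log ha hxa.le
    linarith
  have hηxn : η / x n ≤ η / b := by gcongr
  have hηb : η / b < 1 / ε := by
    rcases eq_or_lt_of_le hη0 with h | h
    · rw [← h]; simp; positivity
    · rw [div_lt_div_iff₀ hb0 hε]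
      nlinarith
  have hηl : 0 ≤ η / lam 0 := by positivity
  have hr' : (0 : ℝ) ≤ (r : ℝ) := Nat.cast_nonneg r
  have : (n : ℝ) ≤ G 0 - G n := by linarith
  rw [hG0] at this
  have hfin : (n : ℝ) < (r : ℝ) * Real.log (lam 0 / a) + 1 / ε := by
    nlinarith [mul_le_mul_of_nonneg_left hlog2 hr']
  linarith
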